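/- Let R be a ℤ^n-graded ring with support in a full-dimensional pointed polyhedral cone C (pointed via γ injective on ℤ^n), v an integral interior point of C, and k ∈ ℕ. Let a_0 < a_1 < ... < a_m be the integer points of -kv + C that are ≤ kv. Then for every finitely generated graded projective R-module P with support contained in -kv + C, F^{-kv}P = 0, and F^{kv}P = P, the functors F^{a_j} form a filtration 0 = F^{a_0}P ⊆ F^{a_1}P ⊆ ... ⊆ F^{a_m}P = P by graded submodules, with successive quotients F^{a_j}P/F^{a_{j-1}}P canonically isomorphic to T(P)_{a_j} ⊗_{R_0} R(-a_j). -/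

import Mathlib

/-- A `ℤⁿ`-graded `R`-module `(P, 𝒬)` is *finitely generated graded projective* if it
is a degree-preserving direct summand of a finite direct sum of shifted copies
`R(-bᵢ)` of `R` (where `R(-b)_a = R_{a-b}`). -/
def IsFGGradedProjective {n : ℕ} {R : Type*} [Ring R] (𝒜 : (Fin n → ℤ) → AddSubgroup R)
    {P : Type*} [AddCommGroup P] [Module R P] (𝒬 : (Fin n → ℤ) → AddSubgroup P) : Prop :=
  ∃ (m : ℕ) (b : Fin m → (Fin n → ℤ)) (s : P →ₗ[R] (Fin m → R)) (p : (Fin m → R) →ₗ[R] P),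
    p.comp s = LinearMap.id ∧
    (∀ (a : Fin n → ℤ) (x : P), x ∈ 𝒬 a → ∀ i, s x i ∈ 𝒜 (a - b i)) ∧
    (∀ (a : Fin n → ℤ) (y : Fin m → R), (∀ i, y i ∈ 𝒜 (a - b i)) → p y ∈ 𝒬 a)

/-- Let `R` be a `ℤⁿ`-graded ring with support in a full-dimensional
pointed polyhedral cone `C`, `v` an integral interior point of `C`, `k ∈ ℕ`, and
`a₀ < a₁ < … < a_m` the integer points of `-kv + C` that are `≤ kv`.  For every
finitely generated graded projective `R`-module `P` with support in `-kv + C`,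
`F^{-kv}P = 0` and `F^{kv}P = P`, the submodules `F^{a_j}P` form a filtration
`0 = F^{a₀}P ⊆ F^{a₁}P ⊆ … ⊆ F^{a_m}P = P`, with successive quotients
`F^{a_j}P/F^{a_{j-1}}P` canonically isomorphic to `T(P)_{a_j} ⊗_{R₀} R(-a_j)`
(for any degree-preserving splitting `σ` of `π : P → T(P)`, the summand
`span R σ(T(P)_{a_j})` complements `F^{a_{j-1}}P` in `F^{a_j}P`, independently of
`σ` modulo `F^{a_{j-1}}P`). -/
theorem filtration_with_canonical_quotients (n ℓ : ℕ)
    (vgen : Fin ℓ → (Fin n → ℝ)) (C : Set (Fin n → ℝ))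
    (hC : C = {x | ∃ c : Fin ℓ → ℝ, (∀ i, 0 ≤ c i) ∧ x = ∑ i, c i • vgen i})
    (γ : (Fin n → ℝ) →ₗ[ℝ] ℝ)
    (hnonneg : ∀ x ∈ C, 0 ≤ γ x)
    (hpointed : ∀ x ∈ C, γ x = 0 → x = 0)
    (ι : (Fin n → ℤ) → (Fin n → ℝ)) (hι : ι = fun a i => (a i : ℝ))
    (hinj : Function.Injective (γ ∘ ι))
    -- `v` an integral interior point, `k ∈ ℕ`, and the window of integer points
    (v : Fin n → ℤ) (hv : ι v ∈ interior C) (k : ℕ)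
    (m : ℕ) (lst : Fin (m + 1) → (Fin n → ℤ))
    (hmono : StrictMono (fun j => γ (ι (lst j))))
    (h0 : lst 0 = -(k : ℤ) • v)
    (hrange : Set.range lst = {a : Fin n → ℤ | ι a ∈ (ι (-(k : ℤ) • v) + ·) '' C ∧
      γ (ι a) ≤ γ (ι ((k : ℤ) • v))})
    -- the graded ring `R` with support in `C`
    (R : Type*) [Ring R] (𝒜 : (Fin n → ℤ) → AddSubgroup R) [GradedRing 𝒜]
    (hsupp : ∀ a, 𝒜 a ≠ ⊥ → ι a ∈ C)
    (Rplus : Ideal R)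
    (hRplus : Rplus = Ideal.span (⋃ a ∈ {a : Fin n → ℤ | 0 < γ (ι a)}, (𝒜 a : Set R)))
    -- a finitely generated graded projective `R`-module `P` in `𝔓gr_k(R)`
    (P : Type*) [AddCommGroup P] [Module R P]
    (𝒬 : (Fin n → ℤ) → AddSubgroup P)
    (hPinternal : DirectSum.IsInternal 𝒬)
    (hPsmul : ∀ (a b : Fin n → ℤ) (r : R) (x : P), r ∈ 𝒜 a → x ∈ 𝒬 b → r • x ∈ 𝒬 (a + b))
    (hPproj : IsFGGradedProjective 𝒜 𝒬)
    (hPsupp : ∀ c : Fin n → ℤ, 𝒬 c ≠ ⊥ → ι c ∈ (ι (-(k : ℤ) • v) + ·) '' C)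
    -- the filtration `F^a P` and the hypotheses `F^{-kv}P = 0`, `F^{kv}P = P`
    (F : (Fin n → ℤ) → Submodule R P)
    (hF : F = fun a => Submodule.span R
      (⋃ d ∈ {d : Fin n → ℤ | γ (ι d) ≤ γ (ι a)}, (𝒬 d : Set P)))
    (hFbot : F (-(k : ℤ) • v) = ⊥)
    (hFtop : F ((k : ℤ) • v) = ⊤)
    -- the projection `π : P → T(P) = P/PR₊`
    (π : P →ₗ[R] (P ⧸ (Rplus • (⊤ : Submodule R P))))
    (hπ : π = (Rplus • (⊤ : Submodule R P)).mkQ) :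
    -- the filtration: `0 = F^{a₀}P ⊆ F^{a₁}P ⊆ … ⊆ F^{a_m}P = P`
    (∀ j j' : Fin (m + 1), j ≤ j' → F (lst j) ≤ F (lst j')) ∧
    F (lst 0) = ⊥ ∧ F (lst (Fin.last m)) = ⊤ ∧
    -- canonical isomorphisms `F^{a_j}P/F^{a_{j-1}}P ≅ T(P)_{a_j} ⊗_{R₀} R(-a_j)`
    (∀ j : Fin m,
      ∀ σ : (P ⧸ (Rplus • (⊤ : Submodule R P))) →+ P,
        (∀ t, π (σ t) = t) → (∀ r ∈ 𝒜 0, ∀ t, σ (r • t) = r • σ t) →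
        (∀ (b : Fin n → ℤ) (x : P), x ∈ 𝒬 b → σ (π x) ∈ 𝒬 b) →
        (∀ x ∈ 𝒬 (lst j.succ), σ (π x) ∈ F (lst j.succ)) ∧
        (F (lst j.succ) = F (lst j.castSucc) ⊔
          Submodule.span R {p : P | ∃ x ∈ 𝒬 (lst j.succ), p = σ (π x)}) ∧
        (Submodule.span R {p : P | ∃ x ∈ 𝒬 (lst j.succ), p = σ (π x)} ⊓
          F (lst j.castSucc) = ⊥) ∧
        -- independence of `σ`: any two splittings agree modulo `F^{a_{j-1}}P`
        (∀ σ' : (P ⧸ (Rplus • (⊤ : Submodule R P))) →+ P,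
          (∀ t, π (σ' t) = t) → (∀ r ∈ 𝒜 0, ∀ t, σ' (r • t) = r • σ' t) →
          (∀ (b : Fin n → ℤ) (x : P), x ∈ 𝒬 b → σ' (π x) ∈ 𝒬 b) →
          ∀ x ∈ 𝒬 (lst j.succ), σ (π x) - σ' (π x) ∈ F (lst j.castSucc))) := by
  classical
  -- ## Arithmetic of the grading functional `g = γ ∘ ι`
  have hι0 : ι 0 = 0 := by funext i; simp [hι]
  have hg0 : γ (ι 0) = 0 := by rw [hι0, map_zero]
  have hgadd : ∀ x y : Fin n → ℤ, γ (ι (x + y)) = γ (ι x) + γ (ι y) := by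
    intro x y
    have : ι (x + y) = ι x + ι y := by funext i; simp [hι]
    rw [this, map_add]
  have hgsub : ∀ x y : Fin n → ℤ, γ (ι (x - y)) = γ (ι x) - γ (ι y) := by
    intro x y
    have : ι (x - y) = ι x - ι y := by funext i; simp [hι]
    rw [this, map_sub]
  -- support of `R` facts
  have supR : ∀ (e : Fin n → ℤ) (r : R), r ∈ 𝒜 e → r ≠ 0 → 0 ≤ γ (ι e) := by
    intro e r hr h0
    refine hnonneg _ (hsupp e ?_)
    intro hbot
    rw [hbot, AddSubgroup.mem_bot] at hr
    exact h0 hr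
  have supRpos : ∀ (e : Fin n → ℤ) (r : R), r ∈ 𝒜 e → r ≠ 0 → e ≠ 0 → 0 < γ (ι e) := by
    intro e r hr h0 hne
    refine lt_of_le_of_ne (supR e r hr h0) ?_
    intro h
    exact hne (hinj (show (γ ∘ ι) e = (γ ∘ ι) 0 by simp [Function.comp, ← h, hg0]))
  have hRgen : ∀ (e : Fin n → ℤ) (r : R), r ∈ 𝒜 e → 0 < γ (ι e) → r ∈ Rplus := by
    intro e r hr hpos
    rw [hRplus]
    exact Ideal.subset_span (Set.mem_biUnion hpos hr)
  -- ## Structure of `Rplus`: all homogeneous components of its elements have positive degree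
  have Lhom : ∀ (c : Fin n → ℤ) (u : R), u ∈ 𝒜 c →
      ∀ x : R, (∀ e, γ (ι e) ≤ 0 → ((DirectSum.decompose 𝒜 x) e : R) = 0) →
      ∀ e, γ (ι e) ≤ 0 → ((DirectSum.decompose 𝒜 (u * x)) e : R) = 0 := by
    intro c u hu x hx e he
    by_cases hu0 : u = 0
    · simp [hu0]
    have hc : 0 ≤ γ (ι c) := supR c u hu hu0
    conv_lhs => rw [← DirectSum.sum_support_decompose 𝒜 x]
    rw [Finset.mul_sum, DirectSum.decompose_sum, DFinsupp.finset_sum_apply,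
      AddSubmonoidClass.coe_finset_sum]
    apply Finset.sum_eq_zero
    intro d hd
    by_cases hde : c + d = e
    · exfalso
      have hd0 : (DirectSum.decompose 𝒜 x) d ≠ 0 := DFinsupp.mem_support_iff.mp hd
      have hdpos : 0 < γ (ι d) := by
        by_contra hneg
        push_neg at hneg
        exact hd0 (by
          have := hx d hneg
          exact Subtype.ext this)
      rw [← hde, hgadd] at he
      linarith
    · exact DirectSum.decompose_of_mem_ne 𝒜
        (SetLike.mul_mem_graded hu (SetLike.coe_mem _)) hde
  have L1 : ∀ r ∈ Rplus, ∀ e, γ (ι e) ≤ 0 → ((DirectSum.decompose 𝒜 r) e : R) = 0 := by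
    intro r hr
    rw [hRplus] at hr
    induction hr using Submodule.span_induction with
    | mem r hrmem =>
      obtain ⟨c, hc, hrc⟩ := Set.mem_iUnion₂.mp hrmem
      intro e he
      refine DirectSum.decompose_of_mem_ne 𝒜 hrc ?_
      intro h
      rw [h] at hc
      have hc' : 0 < γ (ι e) := hc
      linarith
    | zero => intro e he; simp
    | add x y hx hy ihx ihy =>
      intro e he
      rw [DirectSum.decompose_add, DirectSum.add_apply, AddSubgroup.coe_add,
        ihx e he, ihy e he, add_zero]
    | smul a x hx ihx =>
      intro e he
      rw [smul_eq_mul]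
      conv_lhs => rw [← DirectSum.sum_support_decompose 𝒜 a]
      rw [Finset.sum_mul, DirectSum.decompose_sum, DFinsupp.finset_sum_apply,
        AddSubmonoidClass.coe_finset_sum]
      apply Finset.sum_eq_zero
      intro c hc
      exact Lhom c _ (SetLike.coe_mem _) x ihx e he
  have LhomR : ∀ (c : Fin n → ℤ) (u : R), u ∈ 𝒜 c →
      ∀ x : R, (∀ e, γ (ι e) ≤ 0 → ((DirectSum.decompose 𝒜 x) e : R) = 0) →
      ∀ e, γ (ι e) ≤ 0 → ((DirectSum.decompose 𝒜 (x * u)) e : R) = 0 := by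
    intro c u hu x hx e he
    by_cases hu0 : u = 0
    · simp [hu0]
    have hc : 0 ≤ γ (ι c) := supR c u hu hu0
    conv_lhs => rw [← DirectSum.sum_support_decompose 𝒜 x]
    rw [Finset.sum_mul, DirectSum.decompose_sum, DFinsupp.finset_sum_apply,
      AddSubmonoidClass.coe_finset_sum]
    apply Finset.sum_eq_zero
    intro d hd
    by_cases hde : d + c = e
    · exfalso
      have hd0 : (DirectSum.decompose 𝒜 x) d ≠ 0 := DFinsupp.mem_support_iff.mp hd
      have hdpos : 0 < γ (ι d) := by
        by_contra hneg
        push_neg at hneg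
        exact hd0 (Subtype.ext (hx d hneg))
      rw [← hde, hgadd] at he
      linarith
    · exact DirectSum.decompose_of_mem_ne 𝒜
        (SetLike.mul_mem_graded (SetLike.coe_mem _) hu) hde
  have PosmulR : ∀ x : R, (∀ e, γ (ι e) ≤ 0 → ((DirectSum.decompose 𝒜 x) e : R) = 0) →
      ∀ u : R, ∀ e, γ (ι e) ≤ 0 → ((DirectSum.decompose 𝒜 (x * u)) e : R) = 0 := by
    intro x hx u e he
    conv_lhs => rw [← DirectSum.sum_support_decompose 𝒜 u]
    rw [Finset.mul_sum, DirectSum.decompose_sum, DFinsupp.finset_sum_apply,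
      AddSubmonoidClass.coe_finset_sum]
    apply Finset.sum_eq_zero
    intro c _
    exact LhomR c _ (SetLike.coe_mem _) x hx e he
  have L1' : ∀ r : R, (∀ e, γ (ι e) ≤ 0 → ((DirectSum.decompose 𝒜 r) e : R) = 0) →
      r ∈ 𝒜 0 → r = 0 := by
    intro r h1 h2
    have := h1 0 (le_of_eq hg0)
    rwa [DirectSum.decompose_of_mem_same 𝒜 h2] at this
  -- ## The projective splitting
  obtain ⟨mP, b, s, p, hps, hs, hp⟩ := hPproj
  have hpsx : ∀ x : P, p (s x) = x := fun x => by
    simpa using LinearMap.congr_fun hps x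
  have hsingle : ∀ (i : Fin mP) (r : R),
      (Pi.single i r : Fin mP → R) = r • (Pi.single i (1 : R) : Fin mP → R) := by
    intro i r
    funext j
    by_cases h : j = i
    · subst h; simp
    · simp [Pi.single_eq_of_ne h]
  have hexp : ∀ x : P, x = ∑ i, s x i • p (Pi.single i 1) := by
    intro x
    conv_lhs => rw [← hpsx x, ← Finset.univ_sum_single (s x)]
    rw [map_sum]
    exact Finset.sum_congr rfl fun i _ => by rw [hsingle i (s x i), map_smul]
  have hpe : ∀ i, p (Pi.single i 1) ∈ 𝒬 (b i) := by
    intro i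
    apply hp
    intro i'
    by_cases h : i' = i
    · subst h
      simpa [sub_self] using (SetLike.one_mem_graded 𝒜 : (1 : R) ∈ 𝒜 0)
    · rw [Pi.single_eq_of_ne h]
      exact zero_mem _
  have hπ0 : ∀ r : R, r ∈ Rplus → ∀ x : P, π (r • x) = 0 := by
    intro r hr x
    rw [hπ, Submodule.mkQ_apply, Submodule.Quotient.mk_eq_zero]
    exact Submodule.smul_mem_smul hr Submodule.mem_top
  have hker : ∀ w : P, π w = 0 → w ∈ Rplus • (⊤ : Submodule R P) := by
    intro w hw
    rwa [hπ, Submodule.mkQ_apply, Submodule.Quotient.mk_eq_zero] at hw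
  have hsPos : ∀ w ∈ Rplus • (⊤ : Submodule R P), ∀ i,
      ∀ e, γ (ι e) ≤ 0 → ((DirectSum.decompose 𝒜 (s w i)) e : R) = 0 := by
    intro w hw
    refine Submodule.smul_induction_on hw ?_ ?_
    · intro r hr x _ i
      have heq : s (r • x) i = r * s x i := by rw [map_smul]; rfl
      rw [heq]
      exact PosmulR r (L1 r hr) (s x i)
    · intro x y hx hy i e he
      have heq : s (x + y) i = s x i + s y i := by rw [map_add]; rfl
      rw [heq, DirectSum.decompose_add, DirectSum.add_apply, AddSubgroup.coe_add,
        hx i e he, hy i e he, add_zero]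
  -- ## window facts
  have hQne : ∀ (d : Fin n → ℤ) (y : P), y ∈ 𝒬 d → y ≠ 0 → 𝒬 d ≠ ⊥ := by
    intro d y hy h0 hbot
    rw [hbot, AddSubgroup.mem_bot] at hy
    exact h0 hy
  have hwin : ∀ d : Fin n → ℤ, 𝒬 d ≠ ⊥ → γ (ι d) ≤ γ (ι ((k : ℤ) • v)) →
      ∃ j', lst j' = d := by
    intro d h1 h2
    have : d ∈ Set.range lst := by rw [hrange]; exact ⟨hPsupp d h1, h2⟩
    exact this
  have hlstle : ∀ j : Fin (m + 1), γ (ι (lst j)) ≤ γ (ι ((k : ℤ) • v)) := by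
    intro j
    have : lst j ∈ Set.range lst := Set.mem_range_self j
    rw [hrange] at this
    exact this.2
  have hFa : ∀ a, F a = Submodule.span R
      (⋃ d ∈ {d : Fin n → ℤ | γ (ι d) ≤ γ (ι a)}, (𝒬 d : Set P)) := by
    intro a; rw [hF]
  have hQFle : ∀ d a : Fin n → ℤ, γ (ι d) ≤ γ (ι a) → ∀ y ∈ 𝒬 d, y ∈ F a := by
    intro d a hle y hy
    rw [hFa]
    exact Submodule.subset_span (Set.mem_biUnion hle hy)
  have hFmono : ∀ a a' : Fin n → ℤ, γ (ι a) ≤ γ (ι a') → F a ≤ F a' := by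
    intro a a' h
    rw [hFa, hFa]
    apply Submodule.span_mono
    apply Set.biUnion_subset_biUnion_left
    intro d hd
    exact le_trans hd h
  -- ## key lemma: elements of `𝒬 (lst j.succ) ∩ ker π` fall into `F (lst j.castSucc)`
  have hL7 : ∀ (j : Fin m) (w : P), w ∈ 𝒬 (lst j.succ) → π w = 0 →
      w ∈ F (lst j.castSucc) := by
    intro j w hw hπw
    have hsw := hsPos w (hker w hπw)
    have hswA : ∀ i, s w i ∈ 𝒜 (lst j.succ - b i) := hs _ w hw
    rw [hexp w]
    apply Submodule.sum_mem
    intro i _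
    by_cases h0 : s w i = 0
    · simp [h0]
    by_cases hbi : b i = lst j.succ
    · exfalso
      have : s w i ∈ 𝒜 0 := by
        have := hswA i
        rwa [hbi, sub_self] at this
      exact h0 (L1' _ (hsw i) this)
    · have hpos : 0 < γ (ι (lst j.succ - b i)) :=
        supRpos _ _ (hswA i) h0 (sub_ne_zero.mpr (Ne.symm hbi))
      have hlt : γ (ι (b i)) < γ (ι (lst j.succ)) := by
        rw [hgsub] at hpos; linarith
      by_cases hpe0 : p (Pi.single i 1) = 0
      · simp [hpe0]
      obtain ⟨j', hj'⟩ := hwin (b i) (hQne _ _ (hpe i) hpe0)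
        (le_trans hlt.le (hlstle j.succ))
      have hj'lt : j' < j.succ := hmono.lt_iff_lt.mp (by rw [hj']; exact hlt)
      have hj'le : j' ≤ j.castSucc := Fin.le_castSucc_iff.mpr hj'lt
      have hble : γ (ι (b i)) ≤ γ (ι (lst j.castSucc)) := by
        rw [← hj']; exact hmono.monotone hj'le
      exact Submodule.smul_mem _ _ (hQFle _ _ hble _ (hpe i))
  -- ## the four statements
  refine ⟨?_, ?_, ?_, ?_⟩
  · intro j j' hjj'
    exact hFmono _ _ (hmono.monotone hjj')
  · rw [h0]; exact hFbot
  · -- top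
    have hscale : ∀ t : ℝ, 0 ≤ t → ∀ x ∈ C, t • x ∈ C := by
      rw [hC]
      rintro t ht x ⟨c, hc, rfl⟩
      refine ⟨fun i => t * c i, fun i => mul_nonneg ht (hc i), ?_⟩
      rw [Finset.smul_sum]
      exact Finset.sum_congr rfl fun i _ => by rw [smul_smul]
    have hkvmem : ι ((k : ℤ) • v) ∈ (ι (-(k : ℤ) • v) + ·) '' C := by
      refine ⟨(2 * (k : ℝ)) • ι v, hscale _ (by positivity) _ (interior_subset hv), ?_⟩
      funext i
      simp only [hι, Pi.add_apply, Pi.smul_apply, smul_eq_mul]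
      push_cast
      ring
    have hkvrange : (k : ℤ) • v ∈ Set.range lst := by
      rw [hrange]; exact ⟨hkvmem, le_refl _⟩
    obtain ⟨jt, hjt⟩ := hkvrange
    refine le_antisymm le_top ?_
    rw [← hFtop]
    apply hFmono
    rw [← hjt]
    exact hmono.monotone (Fin.le_last jt)
  · intro j σ hσ1 hσ2 hσ3
    have haa' : γ (ι (lst j.castSucc)) < γ (ι (lst j.succ)) :=
      hmono (show j.castSucc < j.succ from Fin.castSucc_lt_succ)
    -- the vector of canonical generators
    set t : Fin mP → P :=
      fun i => if b i = lst j.succ then σ (π (p (Pi.single i 1))) else 0 with ht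
    have hΦ : ∀ z ∈ Submodule.span R {q : P | ∃ x ∈ 𝒬 (lst j.succ), q = σ (π x)},
        z = ∑ i, s z i • t i := by
      intro z hz
      induction hz using Submodule.span_induction with
      | mem x hxS =>
        obtain ⟨x₀, hx₀, rfl⟩ := hxS
        have hxQ : σ (π x₀) ∈ 𝒬 (lst j.succ) := hσ3 _ x₀ hx₀
        have hsx : ∀ i, s (σ (π x₀)) i ∈ 𝒜 (lst j.succ - b i) := hs _ _ hxQ
        have hπx : π (σ (π x₀)) = ∑ i, (if b i = lst j.succ then
            s (σ (π x₀)) i • π (p (Pi.single i 1)) else 0) := by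
          conv_lhs => rw [hexp (σ (π x₀))]
          rw [map_sum]
          refine Finset.sum_congr rfl fun i _ => ?_
          rw [map_smul]
          by_cases hbi : b i = lst j.succ
          · rw [if_pos hbi]
          · rw [if_neg hbi]
            by_cases h0 : s (σ (π x₀)) i = 0
            · simp [h0]
            · have hpos : 0 < γ (ι (lst j.succ - b i)) :=
                supRpos _ _ (hsx i) h0 (sub_ne_zero.mpr (Ne.symm hbi))
              rw [← map_smul]
              exact hπ0 _ (hRgen _ _ (hsx i) hpos) _
        calc σ (π x₀) = σ (π (σ (π x₀))) := by rw [hσ1]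
          _ = ∑ i, s (σ (π x₀)) i • t i := by
              rw [hπx, map_sum]
              refine Finset.sum_congr rfl fun i _ => ?_
              by_cases hbi : b i = lst j.succ
              · rw [if_pos hbi, ht]
                simp only [if_pos hbi]
                have hr0 : s (σ (π x₀)) i ∈ 𝒜 0 := by
                  have := hsx i
                  rwa [hbi, sub_self] at this
                exact hσ2 _ hr0 _
              · rw [if_neg hbi, ht]
                simp only [if_neg hbi]
                rw [map_zero, smul_zero]
      | zero => simp
      | add x y hx hy ihx ihy =>
        calc x + y = ∑ i, s x i • t i + ∑ i, s y i • t i := by rw [← ihx, ← ihy]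
          _ = ∑ i, s (x + y) i • t i := by
              rw [← Finset.sum_add_distrib]
              refine Finset.sum_congr rfl fun i _ => ?_
              rw [map_add, Pi.add_apply, add_smul]
      | smul r x hx ihx =>
        calc r • x = r • ∑ i, s x i • t i := by rw [← ihx]
          _ = ∑ i, s (r • x) i • t i := by
              rw [Finset.smul_sum]
              refine Finset.sum_congr rfl fun i _ => ?_
              rw [map_smul, Pi.smul_apply, smul_eq_mul, mul_smul]
    have hF0 : ∀ z ∈ F (lst j.castSucc), ∀ i, b i = lst j.succ → s z i = 0 := by
      intro z hz
      rw [hFa] at hz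
      induction hz using Submodule.span_induction with
      | mem y hy =>
        obtain ⟨d, hd, hyd⟩ := Set.mem_iUnion₂.mp hy
        intro i hbi
        by_contra hne0
        have h1 : 0 ≤ γ (ι (d - b i)) := supR _ _ (hs _ _ hyd i) hne0
        rw [hbi, hgsub] at h1
        have hd' : γ (ι d) ≤ γ (ι (lst j.castSucc)) := hd
        linarith
      | zero => intro i hbi; simp
      | add x y hx hy ihx ihy =>
        intro i hbi
        rw [map_add, Pi.add_apply, ihx i hbi, ihy i hbi, add_zero]
      | smul r x hx ihx =>
        intro i hbi
        rw [map_smul, Pi.smul_apply, ihx i hbi, smul_zero]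
    refine ⟨?_, ?_, ?_, ?_⟩
    · intro x hx
      exact hQFle _ _ le_rfl _ (hσ3 _ x hx)
    · -- F(a) = F(a') ⊔ span S
      apply le_antisymm
      · rw [hFa (lst j.succ)]
        apply Submodule.span_le.mpr
        intro y hy
        obtain ⟨d, hd, hyd⟩ := Set.mem_iUnion₂.mp hy
        by_cases hcase : γ (ι d) ≤ γ (ι (lst j.castSucc))
        · exact Submodule.mem_sup_left (hQFle _ _ hcase _ hyd)
        · push_neg at hcase
          by_cases hy0 : y = 0
          · simp [hy0]
          obtain ⟨j', hj'⟩ := hwin d (hQne d y hyd hy0) (le_trans hd (hlstle j.succ))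
          have h1 : j.castSucc < j' := hmono.lt_iff_lt.mp (by rw [hj']; exact hcase)
          have h2 : j' ≤ j.succ := hmono.le_iff_le.mp (by rw [hj']; exact hd)
          have hj'eq : j' = j.succ := le_antisymm h2 (Fin.castSucc_lt_iff_succ_le.mp h1)
          rw [hj'eq] at hj'
          subst hj'
          have hsplit : y = (y - σ (π y)) + σ (π y) := by abel
          rw [hsplit]
          apply Submodule.add_mem
          · apply Submodule.mem_sup_left
            apply hL7 j
            · exact AddSubgroup.sub_mem _ hyd (hσ3 _ y hyd)
            · rw [map_sub, hσ1, sub_self]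
          · exact Submodule.mem_sup_right (Submodule.subset_span ⟨y, hyd, rfl⟩)
      · apply sup_le (hFmono _ _ haa'.le)
        apply Submodule.span_le.mpr
        rintro z ⟨x, hx, rfl⟩
        exact hQFle _ _ le_rfl _ (hσ3 _ x hx)
    · -- span S ⊓ F(a') = ⊥
      rw [eq_bot_iff]
      intro z hz
      obtain ⟨hz1, hz2⟩ := Submodule.mem_inf.mp hz
      rw [Submodule.mem_bot]
      rw [hΦ z hz1]
      apply Finset.sum_eq_zero
      intro i _
      by_cases hbi : b i = lst j.succ
      · rw [hF0 z hz2 i hbi, zero_smul]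
      · rw [ht]
        simp only [if_neg hbi]
        rw [smul_zero]
    · -- independence of σ
      intro σ' h1' h2' h3' x hx
      apply hL7 j
      · exact AddSubgroup.sub_mem _ (hσ3 _ x hx) (h3' _ x hx)
      · rw [map_sub, hσ1, h1', sub_self]
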